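/- The encoding of non-ground atoms is lossless: the map sending a program atom (atom with only program function symbols, up to renaming) to the set of its ground instances in which distinct variables are replaced by distinct terms with extraneous principal function symbols is injective, provided there are infinitely many ground terms with extraneous principal function symbols; the original atom is recovered as the most specific generalisation over program function symbols of its encoded instances. -/

import Mathlib

set_option autoImplicit false

namespace Flounder

/-- First-order terms over function symbols `F`, with natural-number variables. -/
inductive Trm (F : Type) : Type
  | var : ℕ → Trm F
  | app : F → List (Trm F) → Trm F

/-- Substitutions map variables to terms. -/
abbrev Subst (F : Type) := ℕ → Trm F

/-- Applying a substitution to a term. -/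
def Trm.subst {F : Type} (θ : Subst F) : Trm F → Trm F
  | .var v => θ v
  | .app f ts => .app f (ts.attach.map (fun t => Trm.subst θ t.1))
  decreasing_by
    have := List.sizeOf_lt_of_mem t.2
    simp only [Trm.app.sizeOf_spec] at *
    omega

/-- Composition of substitutions. -/
def Subst.comp {F : Type} (θ σ : Subst F) : Subst F := fun v => (θ v).subst σ

/-- The variable `v` occurs in the term. -/
inductive Trm.HasVar {F : Type} (v : ℕ) : Trm F → Prop
  | var : Trm.HasVar v (.var v)
  | app {f : F} {ts : List (Trm F)} {t : Trm F} :
      t ∈ ts → Trm.HasVar v t → Trm.HasVar v (.app f ts)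

/-- The function symbol `f` occurs in the term. -/
inductive Trm.HasFunc {F : Type} (f : F) : Trm F → Prop
  | head {ts : List (Trm F)} : Trm.HasFunc f (.app f ts)
  | arg {g : F} {ts : List (Trm F)} {t : Trm F} :
      t ∈ ts → Trm.HasFunc f t → Trm.HasFunc f (.app g ts)

def Trm.Ground {F : Type} (t : Trm F) : Prop := ∀ v, ¬ t.HasVar v

/-- All function symbols of the term belong to `Fp` (a "program term"). -/
def Trm.OnlyFuncs {F : Type} (Fp : Set F) (t : Trm F) : Prop := ∀ f, t.HasFunc f → f ∈ Fp

/-- The principal function symbol is extraneous (an "encoded variable"). -/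
def EVarT {F : Type} (Fp : Set F) : Trm F → Prop
  | .var _ => False
  | .app f _ => f ∉ Fp

/-- The term contains an extraneous function symbol (an "encoded non-ground term"). -/
def ENongroundT {F : Type} (Fp : Set F) (t : Trm F) : Prop := ∃ f, t.HasFunc f ∧ f ∉ Fp

/-- A renaming substitution: variables mapped injectively to variables. -/
def IsRenaming {F : Type} (ρ : Subst F) : Prop :=
  ∃ r : ℕ → ℕ, Function.Injective r ∧ ∀ v, ρ v = Trm.var (r v)

/-- Atoms: a predicate symbol applied to a list of terms. -/
structure Atom (P F : Type) where
  pred : P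
  args : List (Trm F)

def Atom.subst {P F : Type} (θ : Subst F) (A : Atom P F) : Atom P F :=
  ⟨A.pred, A.args.map (Trm.subst θ)⟩

def Atom.HasVar {P F : Type} (A : Atom P F) (v : ℕ) : Prop := ∃ t ∈ A.args, t.HasVar v
def Atom.Ground {P F : Type} (A : Atom P F) : Prop := ∀ v, ¬ A.HasVar v
def Atom.OnlyFuncs {P F : Type} (Fp : Set F) (A : Atom P F) : Prop :=
  ∀ t ∈ A.args, t.OnlyFuncs Fp

/-- `B` is an instance of `A`. -/
def Atom.Instance {P F : Type} (A B : Atom P F) : Prop := ∃ σ : Subst F, B = A.subst σ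
def Atom.Variant {P F : Type} (A B : Atom P F) : Prop := A.Instance B ∧ B.Instance A

def UnifiesA {P F : Type} (θ : Subst F) (A B : Atom P F) : Prop := A.subst θ = B.subst θ
/-- Most general unifier of two atoms: a unifier through which every unifier factors. -/
def IsMGUA {P F : Type} (θ : Subst F) (A B : Atom P F) : Prop :=
  UnifiesA θ A B ∧ ∀ η, UnifiesA η A B → ∃ σ, η = θ.comp σ

/-- Definite clauses. -/
structure Clause (P F : Type) where
  head : Atom P F
  body : List (Atom P F)

def Clause.subst {P F : Type} (θ : Subst F) (c : Clause P F) : Clause P F :=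
  ⟨c.head.subst θ, c.body.map (Atom.subst θ)⟩
def Clause.HasVar {P F : Type} (c : Clause P F) (v : ℕ) : Prop :=
  c.head.HasVar v ∨ ∃ B ∈ c.body, B.HasVar v
def Clause.Ground {P F : Type} (c : Clause P F) : Prop :=
  c.head.Ground ∧ ∀ B ∈ c.body, B.Ground
def Clause.OnlyFuncs {P F : Type} (Fp : Set F) (c : Clause P F) : Prop :=
  c.head.OnlyFuncs Fp ∧ ∀ B ∈ c.body, B.OnlyFuncs Fp

/-- Annotations record the list of (clause, body position) pairs by which an atom was
introduced; `none` marks the top-level goal ("clause 0"). -/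
abbrev Ann (P F : Type) := List (Option (Clause P F) × ℕ)

/-- Annotated goals. -/
abbrev AGoal (P F : Type) := List (Atom P F × Ann P F)

def initGoal {P F : Type} (G : List (Atom P F)) : AGoal P F :=
  G.zipIdx.map fun p => (p.1, [(none, p.2 + 1)])

def AGoal.HasVar {P F : Type} (g : AGoal P F) (v : ℕ) : Prop := ∃ a ∈ g, a.1.HasVar v
def AGoal.inst {P F : Type} (θ : Subst F) (g : AGoal P F) : AGoal P F :=
  g.map fun a => (a.1.subst θ, a.2)

/-- The annotated body of a clause variant `c` (with original clause `c₀`), inserted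
in place of a selected atom with annotation `ann`. -/
def annBody {P F : Type} (c c₀ : Clause P F) (ann : Ann P F) : AGoal P F :=
  c.body.zipIdx.map fun p => (p.1, (some c₀, p.2 + 1) :: ann)

/-- SLD(F) derivations of length `n` from goal `g0` with program `prog`, where only
atoms in the callable set `C` may be selected (SLD resolution: `C = Set.univ`).
`raw i` is the `i`-th goal with atoms as introduced (not yet instantiated), and
`sub i` is the composition of the mgus of the first `i` steps; the actual `i`-th
resolvent is `raw i` instantiated by `sub i`.  Clause variants are renamed apart. -/
structure Derivation (P F : Type) (prog : Set (Clause P F)) (C : Set (Atom P F))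
    (g0 : AGoal P F) (n : ℕ) where
  raw : ℕ → AGoal P F
  sub : ℕ → Subst F
  orig : ℕ → Clause P F
  cl : ℕ → Clause P F
  mgu : ℕ → Subst F
  selAtom : ℕ → Atom P F
  selAnn : ℕ → Ann P F
  hraw0 : raw 0 = g0
  hsub0 : sub 0 = fun v => Trm.var v
  horig : ∀ i < n, orig i ∈ prog
  hvariant : ∀ i < n, ∃ ρ, IsRenaming ρ ∧ cl i = (orig i).subst ρ
  hfresh : ∀ i < n, ∀ v, (cl i).HasVar v →
      (∀ j ≤ i, ¬ AGoal.HasVar (raw j) v) ∧ sub i v = Trm.var v ∧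
        ∀ u, ¬ Trm.HasVar v (sub i u)
  hstep : ∀ i < n, ∃ pre post, raw i = pre ++ ((selAtom i, selAnn i) :: post) ∧
      (selAtom i).subst (sub i) ∈ C ∧
      IsMGUA (mgu i) ((selAtom i).subst (sub i)) (cl i).head ∧
      raw (i + 1) = pre ++ annBody (cl i) (orig i) (selAnn i) ++ post
  hsubs : ∀ i < n, sub (i + 1) = (sub i).comp (mgu i)

namespace Derivation

variable {P F : Type} {prog : Set (Clause P F)} {C : Set (Atom P F)} {g0 : AGoal P F} {n : ℕ}

/-- The `i`-th resolvent. -/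
def resolvent (D : Derivation P F prog C g0 n) (i : ℕ) : AGoal P F :=
  AGoal.inst (D.sub i) (D.raw i)

/-- The atoms of the `i`-th resolvent. -/
def resAtoms (D : Derivation P F prog C g0 n) (i : ℕ) : List (Atom P F) :=
  (D.resolvent i).map Prod.fst

def rawAtoms (D : Derivation P F prog C g0 n) (i : ℕ) : List (Atom P F) :=
  (D.raw i).map Prod.fst

def Successful (D : Derivation P F prog C g0 n) : Prop := D.raw n = []

/-- Floundered: the last resolvent is nonempty and none of its atoms is callable. -/
def Floundered (D : Derivation P F prog C g0 n) : Prop :=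
  D.raw n ≠ [] ∧ ∀ a ∈ D.resolvent n, a.1 ∉ C

/-- The composed answer substitution of the derivation. -/
def answer (D : Derivation P F prog C g0 n) : Subst F := D.sub n

end Derivation

/-- Two derivations use the same clause selection: corresponding selected atoms
(equal annotations) are resolved with the same program clause. -/
def SameSelection {P F : Type} {prog prog' : Set (Clause P F)} {C C' : Set (Atom P F)}
    {g0 g0' : AGoal P F} {n n' : ℕ}
    (D : Derivation P F prog C g0 n) (D' : Derivation P F prog' C' g0' n') : Prop :=
  ∀ i < n, ∀ i' < n', D.selAnn i = D'.selAnn i' → D.orig i = D'.orig i'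

/-- The answer substitution is a renaming on the variables of goal `G`. -/
def RenamingOnGoal {P F : Type} (G : List (Atom P F)) (θ : Subst F) : Prop :=
  (∀ v, (∃ A ∈ G, A.HasVar v) → ∃ u, θ v = Trm.var u) ∧
  (∀ v w, (∃ A ∈ G, A.HasVar v) → (∃ A ∈ G, A.HasVar w) → v ≠ w → θ v ≠ θ w)

/-- Goal-level instance (one substitution applied throughout). -/
def GoalInst {P F : Type} (g h : List (Atom P F)) : Prop :=
  ∃ σ : Subst F, h = g.map (Atom.subst σ)

/-- `m` is a most general common instance of `g₁` and `g₂`. -/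
def MGIGoal {P F : Type} (g₁ g₂ m : List (Atom P F)) : Prop :=
  GoalInst g₁ m ∧ GoalInst g₂ m ∧
    ∀ m', GoalInst g₁ m' → GoalInst g₂ m' → GoalInst m m'

/-! ## Delay declarations -/

/-- Delay conditions over `n` argument positions, built from `var`, `nonground`,
conjunction and disjunction. -/
inductive DCond : ℕ → Type
  | var {n : ℕ} : Fin n → DCond n
  | nonground {n : ℕ} : Fin n → DCond n
  | conj {n : ℕ} : DCond n → DCond n → DCond n
  | disj {n : ℕ} : DCond n → DCond n → DCond n

/-- Concrete (procedural) truth of a delay condition. -/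
def DCond.holds {F : Type} {n : ℕ} (args : Fin n → Trm F) : DCond n → Prop
  | DCond.var i => ∃ v, args i = Trm.var v
  | DCond.nonground i => ¬ Trm.Ground (args i)
  | DCond.conj c d => DCond.holds args c ∧ DCond.holds args d
  | DCond.disj c d => DCond.holds args c ∨ DCond.holds args d

structure DelayDecl (P : Type) where
  pred : P
  arity : ℕ
  cond : DCond arity

/-- A program with delay declarations. -/
structure DProg (P F : Type) where
  prog : Set (Clause P F)
  delays : Set (DelayDecl P)

/-- An atom matches some delay declaration whose condition holds. -/
def Delayed {P F : Type} (dp : DProg P F) (A : Atom P F) : Prop :=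
  ∃ d ∈ dp.delays, d.pred = A.pred ∧ ∃ h : A.args.length = d.arity,
    DCond.holds (fun i => A.args.get (Fin.cast h.symm i)) d.cond

/-- The callable atom set induced by the delay declarations. -/
def Callable {P F : Type} (dp : DProg P F) : Set (Atom P F) := {A | ¬ Delayed dp A}

/-- A nonempty goal all of whose atoms are delayed. -/
def ImmFloundered {P F : Type} (dp : DProg P F) (G : List (Atom P F)) : Prop :=
  G ≠ [] ∧ ∀ A ∈ G, Delayed dp A

/-! ## The SF transformation -/

/-- Predicates of `SF(P)`: the original predicates plus `evar/1` and `enonground/1`. -/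
inductive SPred (P : Type) : Type
  | orig : P → SPred P
  | evar : SPred P
  | enonground : SPred P

def Atom.mapPred {P Q F : Type} (f : P → Q) (A : Atom P F) : Atom Q F := ⟨f A.pred, A.args⟩
def Clause.mapPred {P Q F : Type} (f : P → Q) (c : Clause P F) : Clause Q F :=
  ⟨c.head.mapPred f, c.body.map (Atom.mapPred f)⟩

/-- Disjunctive normal form of a delay condition: a list of conjunctions of
literals `(i, true)` (= var) and `(i, false)` (= nonground). -/
def DCond.dnf {n : ℕ} : DCond n → List (List (Fin n × Bool))
  | DCond.var i => [[(i, true)]]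
  | DCond.nonground i => [[(i, false)]]
  | DCond.conj c d => (DCond.dnf c).flatMap (fun a => (DCond.dnf d).map (fun b => a ++ b))
  | DCond.disj c d => DCond.dnf c ++ DCond.dnf d

/-- The delay clauses `A :- C'` added for the delay declarations (conditions
translated to `evar`/`enonground` calls, one clause per DNF disjunct). -/
def declClauses {P F : Type} (dp : DProg P F) : Set (Clause (SPred P) F) :=
  { c | ∃ d ∈ dp.delays, ∃ conj ∈ DCond.dnf d.cond,
      c = ⟨⟨SPred.orig d.pred, (List.range d.arity).map Trm.var⟩,
           conj.map (fun p =>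
             ⟨if p.2 then SPred.evar else SPred.enonground, [Trm.var (p.1 : ℕ)]⟩)⟩ }

/-- The infinite fact set defining `evar/1`. -/
def evarFacts (P : Type) {F : Type} (Fp : Set F) : Set (Clause (SPred P) F) :=
  { c | ∃ t : Trm F, t.Ground ∧ EVarT Fp t ∧ c = ⟨⟨SPred.evar, [t]⟩, []⟩ }

/-- The infinite fact set defining `enonground/1`. -/
def engFacts (P : Type) {F : Type} (Fp : Set F) : Set (Clause (SPred P) F) :=
  { c | ∃ t : Trm F, t.Ground ∧ ENongroundT Fp t ∧ c = ⟨⟨SPred.enonground, [t]⟩, []⟩ }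

/-- All delay clauses: those for the declarations plus the `evar`/`enonground` facts. -/
def delayClausesAll {P F : Type} (Fp : Set F) (dp : DProg P F) : Set (Clause (SPred P) F) :=
  declClauses dp ∪ evarFacts P Fp ∪ engFacts P Fp

/-- The transformed program `SF(P)`. -/
def SFprog {P F : Type} (Fp : Set F) (dp : DProg P F) : Set (Clause (SPred P) F) :=
  (Clause.mapPred SPred.orig '' dp.prog) ∪ delayClausesAll Fp dp

/-- The (ground) success set of a program: ground atoms with successful SLD
derivations. -/
def SS {P F : Type} (prog : Set (Clause P F)) : Set (Atom P F) :=
  { A | A.Ground ∧ ∃ n, ∃ D : Derivation P F prog Set.univ (initGoal [A]) n, D.Successful }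

/-- The non-ground flounder set: program atoms with floundered derivations whose
floundered computed answer substitution is a renaming (empty). -/
def NFS {P F : Type} (Fp : Set F) (prog : Set (Clause P F)) (C : Set (Atom P F)) :
    Set (Atom P F) :=
  { A | A.OnlyFuncs Fp ∧ ∃ n, ∃ D : Derivation P F prog C (initGoal [A]) n,
        D.Floundered ∧ RenamingOnGoal [A] (D.sub n) }

/-- `A` is a ground encoding of `B`: distinct variables of `B` are replaced by
distinct ground terms with extraneous principal function symbols. -/
def Encodes {P F : Type} (Fp : Set F) (B A : Atom P F) : Prop :=
  ∃ σ : Subst F, A = B.subst σ ∧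
    (∀ v, B.HasVar v → (σ v).Ground ∧ EVarT Fp (σ v)) ∧
    (∀ v w, B.HasVar v → B.HasVar w → v ≠ w → σ v ≠ σ w)

/-- The encoded flounder set. -/
def EFS {P F : Type} (Fp : Set F) (prog : Set (Clause P F)) (C : Set (Atom P F)) :
    Set (Atom P F) :=
  { A | ∃ B ∈ NFS Fp prog C, Encodes Fp B A }

/-- The computed answer binds each variable of `G` either to a variable or to a
ground term with extraneous principal function symbol, injectively. -/
def ExtrAnswer {P F : Type} (Fp : Set F) (G : List (Atom P F)) (θ : Subst F) : Prop :=
  (∀ v, (∃ A ∈ G, A.HasVar v) →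
      (∃ u, θ v = Trm.var u) ∨ ((θ v).Ground ∧ EVarT Fp (θ v))) ∧
  (∀ v w, (∃ A ∈ G, A.HasVar v) → (∃ A ∈ G, A.HasVar w) → v ≠ w → θ v ≠ θ w)

/-! ## Proof trees and the flagged immediate consequence operator -/

/-- `Proof prog A n`: the ground atom `A` has an SLD proof tree of height ≤ `n`. -/
inductive Proof {P F : Type} (prog : Set (Clause P F)) : Atom P F → ℕ → Prop
  | node {c : Clause P F} {γ : Subst F} {m : ℕ} :
      c ∈ prog → (Clause.subst γ c).Ground →
      (∀ B ∈ (Clause.subst γ c).body, Proof prog B m) →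
      Proof prog (Clause.subst γ c).head (m + 1)
  | succ {A : Atom P F} {m : ℕ} : Proof prog A m → Proof prog A (m + 1)

/-- `ProofD prog S A n`: proof tree of height ≤ `n` using at least one clause from `S`. -/
inductive ProofD {P F : Type} (prog S : Set (Clause P F)) : Atom P F → ℕ → Prop
  | here {c : Clause P F} {γ : Subst F} {m : ℕ} :
      c ∈ prog → c ∈ S → (Clause.subst γ c).Ground →
      (∀ B ∈ (Clause.subst γ c).body, Proof prog B m) →
      ProofD prog S (Clause.subst γ c).head (m + 1)
  | there {c : Clause P F} {γ : Subst F} {m : ℕ} {B : Atom P F} :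
      c ∈ prog → (Clause.subst γ c).Ground →
      (∀ B' ∈ (Clause.subst γ c).body, Proof prog B' m) →
      B ∈ (Clause.subst γ c).body → ProofD prog S B m →
      ProofD prog S (Clause.subst γ c).head (m + 1)
  | succ {A : Atom P F} {m : ℕ} : ProofD prog S A m → ProofD prog S A (m + 1)

/-- The standard immediate consequence operator. -/
def Tp {P F : Type} (prog : Set (Clause P F)) (I : Set (Atom P F)) : Set (Atom P F) :=
  { A | ∃ c ∈ prog, ∃ γ : Subst F, (Clause.subst γ c).Ground ∧
        (Clause.subst γ c).head = A ∧ ∀ B ∈ (Clause.subst γ c).body, B ∈ I }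

/-- f-interpretations: a set of ground atoms, some flagged. -/
structure FInterp (P F : Type) where
  atoms : Set (Atom P F)
  flagged : Set (Atom P F)

/-- The flagged immediate consequence operator `T^f_P`. -/
def Tf {P F : Type} (Fp : Set F) (dp : DProg P F) (I : FInterp (SPred P) F) :
    FInterp (SPred P) F where
  atoms := Tp (SFprog Fp dp) I.atoms
  flagged := { A | A ∈ Tp (SFprog Fp dp) I.atoms ∧
      (A.pred = SPred.evar ∨ A.pred = SPred.enonground ∨
       ∃ c ∈ SFprog Fp dp, ∃ γ : Subst F, (Clause.subst γ c).Ground ∧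
         (Clause.subst γ c).head = A ∧
         (∀ B ∈ (Clause.subst γ c).body, B ∈ I.atoms) ∧
         ∃ B ∈ (Clause.subst γ c).body, B ∈ I.flagged) }

/-- Iterates `T^f_P ↑ n`. -/
def TfIter {P F : Type} (Fp : Set F) (dp : DProg P F) : ℕ → FInterp (SPred P) F
  | 0 => ⟨∅, ∅⟩
  | m + 1 => Tf Fp dp (TfIter Fp dp m)

/-- `T^f_P ↑ ω`. -/
def TfOmega {P F : Type} (Fp : Set F) (dp : DProg P F) : FInterp (SPred P) F :=
  ⟨⋃ m, (TfIter Fp dp m).atoms, ⋃ m, (TfIter Fp dp m).flagged⟩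


/-! ### Auxiliary material for the losslessness proof -/

section Aux

variable {F : Type}

theorem Trm.subst_var (θ : Subst F) (v : ℕ) : Trm.subst θ (.var v) = θ v := by
  rw [Trm.subst]

theorem Trm.subst_app (θ : Subst F) (f : F) (ts : List (Trm F)) :
    Trm.subst θ (.app f ts) = .app f (ts.map (Trm.subst θ)) := by
  rw [Trm.subst]
  congr 1
  simp [List.attach_map_val]

/-- A convenient induction principle for terms. -/
theorem Trm.myInduction {motive : Trm F → Prop}
    (hvar : ∀ v, motive (Trm.var v))
    (happ : ∀ f ts, (∀ t ∈ ts, motive t) → motive (Trm.app f ts)) :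
    ∀ t, motive t
  | .var v => hvar v
  | .app f ts => happ f ts (fun t ht => Trm.myInduction hvar happ t)
  decreasing_by
    have := List.sizeOf_lt_of_mem ht
    simp only [Trm.app.sizeOf_spec] at *
    omega

open Classical in
/-- Decoding: replace each encoded variable (a term in the range of `σ`) by the
corresponding variable, leaving other structure intact. -/
noncomputable def decode (σ : Subst F) : Trm F → Trm F
  | .var v => .var v
  | .app f ts =>
      if h : ∃ w, Trm.app f ts = σ w then .var h.choose
      else .app f (ts.attach.map fun t => decode σ t.1)
  decreasing_by
    have := List.sizeOf_lt_of_mem t.2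
    simp only [Trm.app.sizeOf_spec] at *
    omega

theorem decode_app (σ : Subst F) (f : F) (ts : List (Trm F))
    (h : ¬ ∃ w, Trm.app f ts = σ w) :
    decode σ (.app f ts) = .app f (ts.map (decode σ)) := by
  rw [decode, dif_neg h]
  congr 1
  simp [List.attach_map_val]

variable (Fp : Set F)

theorem evar_ne_app {t : Trm F} (h : EVarT Fp t) {f : F} (hf : f ∈ Fp)
    (ts : List (Trm F)) : Trm.app f ts ≠ t := by
  cases t with
  | var v => simp
  | app g us =>
    intro he
    injection he with h1 h2
    subst h1
    exact h hf

theorem onlyFuncs_arg {f : F} {ts : List (Trm F)} {t : Trm F} (ht : t ∈ ts)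
    (h : (Trm.app f ts).OnlyFuncs Fp) : t.OnlyFuncs Fp :=
  fun g hg => h g (.arg ht hg)

theorem onlyFuncs_head {f : F} {ts : List (Trm F)}
    (h : (Trm.app f ts).OnlyFuncs Fp) : f ∈ Fp :=
  h f .head

theorem decode_subst_self {σ : Subst F} (hinj : Function.Injective σ)
    (he : ∀ v, EVarT Fp (σ v)) :
    ∀ t : Trm F, t.OnlyFuncs Fp → decode σ (t.subst σ) = t := by
  intro t
  induction t using Trm.myInduction with
  | hvar v =>
    intro _
    rw [Trm.subst_var]
    cases hσ : σ v with
    | var w => exact absurd (he v) (by rw [hσ]; simp [EVarT])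
    | app g us =>
      have hcond : ∃ w, Trm.app g us = σ w := ⟨v, hσ.symm⟩
      rw [decode, dif_pos hcond]
      have h2 := hcond.choose_spec
      exact congrArg Trm.var (hinj (h2.symm.trans hσ.symm))
  | happ f ts ih =>
    intro honly
    have hf : f ∈ Fp := onlyFuncs_head Fp honly
    rw [Trm.subst_app]
    rw [decode_app σ f _ (fun ⟨w, hw⟩ => evar_ne_app Fp (he w) hf _ hw)]
    rw [List.map_map]
    congr 1
    rw [show ts = ts.map id by simp]
    rw [List.map_map]
    exact List.map_congr_left fun t ht => by
      simpa using ih t ht (onlyFuncs_arg Fp ht honly)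

theorem decode_subst_comm {σ : Subst F} (he : ∀ v, EVarT Fp (σ v)) (τ : Subst F) :
    ∀ t : Trm F, t.OnlyFuncs Fp →
      decode σ (t.subst τ) = t.subst (fun v => decode σ (τ v)) := by
  intro t
  induction t using Trm.myInduction with
  | hvar v =>
    intro _
    rw [Trm.subst_var, Trm.subst_var]
  | happ f ts ih =>
    intro honly
    have hf : f ∈ Fp := onlyFuncs_head Fp honly
    rw [Trm.subst_app]
    rw [decode_app σ f _ (fun ⟨w, hw⟩ => evar_ne_app Fp (he w) hf _ hw)]
    rw [Trm.subst_app, List.map_map]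
    congr 1
    exact List.map_congr_left fun t ht => ih t ht (onlyFuncs_arg Fp ht honly)

theorem instance_of_instance_encode {P : Type} {σ : Subst F}
    (hinj : Function.Injective σ) (he : ∀ v, EVarT Fp (σ v)) {B B' : Atom P F}
    (hB : B.OnlyFuncs Fp) (hB' : B'.OnlyFuncs Fp)
    (h : B'.Instance (B.subst σ)) : B'.Instance B := by
  obtain ⟨τ, hτ⟩ := h
  refine ⟨fun v => decode σ (τ v), ?_⟩
  obtain ⟨p, args⟩ := B
  obtain ⟨p', args'⟩ := B'
  simp only [Atom.subst, Atom.mk.injEq] at hτ ⊢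
  obtain ⟨hp, hargs⟩ := hτ
  refine ⟨hp, ?_⟩
  have h1 : (args.map (Trm.subst σ)).map (decode σ) = args := by
    rw [List.map_map]
    rw [show args = args.map id from (List.map_id args).symm]
    rw [List.map_map]
    exact List.map_congr_left fun t ht => by
      simpa using decode_subst_self Fp hinj he t (hB t ht)
  have h2 : (args'.map (Trm.subst τ)).map (decode σ) =
      args'.map (Trm.subst (fun v => decode σ (τ v))) := by
    rw [List.map_map]
    exact List.map_congr_left fun t ht => decode_subst_comm Fp he τ t (hB' t ht)
  rw [hargs] at h1
  rw [h2] at h1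
  exact h1.symm

end Aux

/-- the encoding of program atoms by their extraneous ground instances
is injective up to renaming, and the atom is the most specific generalisation over
program function symbols of its encoded instances. -/
theorem encoding_lossless {P F : Type} (Fp : Set F)
    (hinf : {t : Trm F | t.Ground ∧ EVarT Fp t}.Infinite) :
    (forall B1 B2 : Atom P F, B1.OnlyFuncs Fp -> B2.OnlyFuncs Fp ->
      {A | Encodes Fp B1 A} = {A | Encodes Fp B2 A} -> B1.Variant B2) ∧
    (forall B : Atom P F, B.OnlyFuncs Fp ->
      (forall A, Encodes Fp B A -> B.Instance A) ∧
      (forall B' : Atom P F, B'.OnlyFuncs Fp ->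
        (forall A, Encodes Fp B A -> B'.Instance A) -> B'.Instance B)) := by
  classical
  have e := hinf.natEmbedding
  set σe : Subst F := fun v => (e v : Trm F) with hσe
  have hg : ∀ v, (σe v).Ground := fun v => (e v).2.1
  have he : ∀ v, EVarT Fp (σe v) := fun v => (e v).2.2
  have hi : Function.Injective σe := fun a b h => e.injective (Subtype.ext h)
  have henc : ∀ B : Atom P F, Encodes Fp B (B.subst σe) := fun B =>
    ⟨σe, rfl, fun v _ => ⟨hg v, he v⟩, fun v w _ _ hne h => hne (hi h)⟩
  have enc_inst : ∀ (B A : Atom P F), Encodes Fp B A → B.Instance A := by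
    rintro B A ⟨σ, h, _, _⟩
    exact ⟨σ, h⟩
  have key : ∀ B B' : Atom P F, B.OnlyFuncs Fp → B'.OnlyFuncs Fp →
      (∀ A, Encodes Fp B A → B'.Instance A) → B'.Instance B := fun B B' hB hB' h =>
    instance_of_instance_encode Fp hi he hB hB' (h _ (henc B))
  constructor
  · intro B1 B2 h1 h2 hset
    have h12 : ∀ A, Encodes Fp B1 A ↔ Encodes Fp B2 A := fun A => Set.ext_iff.mp hset A
    constructor
    · exact key B2 B1 h2 h1 fun A hA => enc_inst B1 A ((h12 A).mpr hA)
    · exact key B1 B2 h1 h2 fun A hA => enc_inst B2 A ((h12 A).mp hA)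
  · intro B hB
    exact ⟨fun A => enc_inst B A, fun B' hB' h => key B B' hB hB' h⟩

end Flounder
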